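/- arXiv:1702.06785 — 3 statements merged into one kernel-verified Lean document; each statement's English description precedes it below -/
import Mathlib

section
/- Let R ⊆ ℝ^d be a nonempty bounded open set, U a metric space, λ a finite Radon probability measure with support in R, and for each α ∈ U let ν_α be a Radon probability measure with support in R. For each continuous f : R → [0,1] define Φ_f(α) := ∫ f dν_α. If for every such f the map α ↦ Φ_f(α) is lower semicontinuous, then the set {α ∈ U : ν_α ⊥ λ} is a G_δ subset of U. -/
open MeasureTheory Set Filter
open scoped ENNReal NNReal

lemma hlp_facts {X : Type*} [MeasurableSpace X] [TopologicalSpace X] [OpensMeasurableSpace X]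
    {R : Set X} (hRo : IsOpen R)
    (μ : Measure X) [IsProbabilityMeasure μ] (hμ : μ Rᶜ = 0)
    {f : X → ℝ} (hf : ContinuousOn f R) (h01 : MapsTo f R (Icc (0:ℝ) 1)) :
    Integrable f μ ∧ (0 ≤ ∫ x, f x ∂μ) ∧ (∫ x, f x ∂μ ≤ 1) ∧
      (∫ x, (1 - f x) ∂μ = 1 - ∫ x, f x ∂μ) := by
  have hae : ∀ᵐ x ∂μ, x ∈ R := by
    rw [ae_iff]
    exact hμ
  have hm : AEMeasurable f μ := by
    have h := hf.aemeasurable hRo.measurableSet (μ := μ)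
    rwa [Measure.restrict_eq_self_of_ae_mem hae] at h
  have hint : Integrable f μ := by
    refine Integrable.mono' (integrable_const 1) hm.aestronglyMeasurable ?_
    refine hae.mono fun x hx => ?_
    have h1 := (h01 hx).1; have h2 := (h01 hx).2
    rw [Real.norm_eq_abs, abs_le]; constructor <;> linarith
  have h0 : 0 ≤ ∫ x, f x ∂μ :=
    integral_nonneg_of_ae (hae.mono fun x hx => (h01 hx).1)
  have h1 : ∫ x, f x ∂μ ≤ 1 := by
    have := integral_mono_ae hint (integrable_const 1) (hae.mono fun x hx => (h01 hx).2)
    simpa using this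
  refine ⟨hint, h0, h1, ?_⟩
  rw [integral_sub (integrable_const 1) hint]
  simp

lemma hlp_markov {X : Type*} [MeasurableSpace X]
    (μ : Measure X) [IsFiniteMeasure μ] {f : X → ℝ} (hint : Integrable f μ)
    (h0 : 0 ≤ᵐ[μ] f) {T : Set X} (hT : MeasurableSet T) (hle : ∀ x ∈ T, (1/2:ℝ) ≤ f x) :
    μ T ≤ ENNReal.ofReal (2 * ∫ x, f x ∂μ) := by
  have h1 : (1/2:ℝ) * (μ T).toReal ≤ ∫ x in T, f x ∂μ :=
    setIntegral_ge_of_const_le_real hT (measure_ne_top μ T) hle hint.integrableOn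
  have h2 : ∫ x in T, f x ∂μ ≤ ∫ x, f x ∂μ := setIntegral_le_integral hint h0
  have h3 : (μ T).toReal ≤ 2 * ∫ x, f x ∂μ := by linarith
  calc μ T = ENNReal.ofReal (μ T).toReal := (ENNReal.ofReal_toReal (measure_ne_top μ T)).symm
  _ ≤ _ := ENNReal.ofReal_le_ofReal h3

/-- If `R ⊆ ℝ^d` is a nonempty bounded open set, `lam` is a finite Radon
probability measure supported in `R`, each `ν α` is a Radon probability measure supported
in `R`, and for every continuous `f : R → [0,1]` the map `α ↦ ∫ f dν_α` is lower
semicontinuous, then `{α | ν α ⊥ lam}` is a Gδ set. -/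
theorem stmt0 {d : ℕ} {U : Type*} [MetricSpace U]
    (R : Set (EuclideanSpace ℝ (Fin d))) (hRne : R.Nonempty) (hRb : Bornology.IsBounded R)
    (hRo : IsOpen R)
    (lam : Measure (EuclideanSpace ℝ (Fin d))) [IsFiniteMeasure lam] [IsProbabilityMeasure lam]
    [lam.Regular] (hlam : lam Rᶜ = 0)
    (ν : U → Measure (EuclideanSpace ℝ (Fin d))) [∀ α, IsProbabilityMeasure (ν α)]
    [∀ α, (ν α).Regular] (hν : ∀ α, (ν α) Rᶜ = 0)
    (hlsc : ∀ f : EuclideanSpace ℝ (Fin d) → ℝ, ContinuousOn f R →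
      MapsTo f R (Icc (0:ℝ) 1) →
      LowerSemicontinuous (fun α => ∫ x, f x ∂(ν α))) :
    IsGδ {α : U | (ν α).MutuallySingular lam} := by
  classical
  have key : {α : U | (ν α).MutuallySingular lam} =
      ⋂ n : ℕ, ⋃ f : EuclideanSpace ℝ (Fin d) → ℝ,
        ⋃ _ : ContinuousOn f R ∧ MapsTo f R (Icc (0:ℝ) 1),
          {α : U | ∫ x, f x ∂(ν α) + ∫ x, (1 - f x) ∂lam < 1 / (n + 1)} := by
    ext α
    simp only [mem_setOf_eq, mem_iInter, mem_iUnion]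
    constructor
    · rintro ⟨s, hsm, hνs, hLs⟩ n
      have hδ : (0:ℝ) < 1 / ((n:ℝ) + 1) := by positivity
      set δ : ℝ := 1 / ((n:ℝ) + 1) with hδdef
      have hε0 : ENNReal.ofReal (δ/3) ≠ 0 := by
        rw [Ne, ENNReal.ofReal_eq_zero, not_le]; linarith
      have hLs1 : lam s = 1 := by
        have h := measure_add_measure_compl (μ := lam) hsm
        rwa [hLs, add_zero, measure_univ] at h
      obtain ⟨K, hKs, hK, hLK⟩ := hsm.exists_isCompact_lt_add (measure_ne_top lam s) hε0
      have hKc : lam Kᶜ ≤ ENNReal.ofReal (δ/3) := by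
        rw [measure_compl hK.measurableSet (measure_ne_top _ _), measure_univ,
          tsub_le_iff_right]
        calc (1:ℝ≥0∞) = lam s := hLs1.symm
        _ ≤ lam K + ENNReal.ofReal (δ/3) := hLK.le
        _ = ENNReal.ofReal (δ/3) + lam K := add_comm _ _
      have hνK : ν α K = 0 :=
        le_antisymm (hνs ▸ measure_mono hKs) (zero_le)
      obtain ⟨V, hKV, hVo, hVε⟩ := Set.exists_isOpen_lt_of_lt K (ENNReal.ofReal (δ/3))
        (by rw [hνK]; exact pos_iff_ne_zero.mpr hε0)
      obtain ⟨f, hf0, hf1, hf01⟩ := exists_continuous_zero_one_of_isClosed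
        hVo.isClosed_compl hK.isClosed
        (Set.disjoint_left.mpr fun x hxV hxK => hxV (hKV hxK))
      have hfP : ContinuousOn (⇑f) R ∧ MapsTo (⇑f) R (Icc (0:ℝ) 1) :=
        ⟨f.continuous.continuousOn, fun x _ => hf01 x⟩
      refine ⟨⇑f, hfP, ?_⟩
      have hfν := hlp_facts hRo (ν α) (hν α) hfP.1 hfP.2
      have hfL := hlp_facts hRo lam hlam hfP.1 hfP.2
      have b1 : ∫ x, f x ∂(ν α) ≤ (ν α V).toReal := by
        have hind : Integrable (V.indicator fun _ => (1:ℝ)) (ν α) :=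
          (integrable_const 1).indicator hVo.measurableSet
        have hle : ∀ x, f x ≤ V.indicator (fun _ => (1:ℝ)) x := by
          intro x; by_cases hx : x ∈ V
          · rw [indicator_of_mem hx]; exact (hf01 x).2
          · rw [indicator_of_notMem hx]
            have := hf0 (hx : x ∈ Vᶜ)
            simp only [Pi.zero_apply] at this
            rw [this]
        calc ∫ x, f x ∂(ν α) ≤ ∫ x, V.indicator (fun _ => (1:ℝ)) x ∂(ν α) :=
              integral_mono hfν.1 hind hle
        _ = (ν α V).toReal := by
              rw [integral_indicator_const (1:ℝ) hVo.measurableSet]; simp; rfl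
      have b1' : (ν α V).toReal ≤ δ/3 :=
        ENNReal.toReal_le_of_le_ofReal (by linarith) hVε.le
      have b2 : ∫ x, (1 - f x) ∂lam ≤ (lam Kᶜ).toReal := by
        have hind : Integrable (Kᶜ.indicator fun _ => (1:ℝ)) lam :=
          (integrable_const 1).indicator hK.measurableSet.compl
        have hle : ∀ x, 1 - f x ≤ Kᶜ.indicator (fun _ => (1:ℝ)) x := by
          intro x; by_cases hx : x ∈ K
          · rw [indicator_of_notMem (by simpa using hx)]
            have := hf1 hx
            simp only [Pi.one_apply] at this
            rw [this]; norm_num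
          · rw [indicator_of_mem (by simpa using hx)]
            have := (hf01 x).1; linarith
        calc ∫ x, (1 - f x) ∂lam ≤ ∫ x, Kᶜ.indicator (fun _ => (1:ℝ)) x ∂lam :=
              integral_mono ((integrable_const 1).sub hfL.1) hind hle
        _ = (lam Kᶜ).toReal := by
              rw [integral_indicator_const (1:ℝ) hK.measurableSet.compl]; simp; rfl
      have b2' : (lam Kᶜ).toReal ≤ δ/3 :=
        ENNReal.toReal_le_of_le_ofReal (by linarith) hKc
      have : ∫ x, f x ∂(ν α) + ∫ x, (1 - f x) ∂lam ≤ δ/3 + δ/3 := by linarith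
      linarith
    · intro h
      have hch : ∀ n : ℕ, ∃ f : EuclideanSpace ℝ (Fin d) → ℝ,
          (ContinuousOn f R ∧ MapsTo f R (Icc (0:ℝ) 1)) ∧
          ∫ x, f x ∂(ν α) + ∫ x, (1 - f x) ∂lam < ((2:ℝ)^(n+1))⁻¹ := by
        intro n
        obtain ⟨f, hf, hb⟩ := h (2^(n+1) - 1)
        refine ⟨f, hf, lt_of_lt_of_le hb ?_⟩
        have h1 : (1:ℕ) ≤ 2^(n+1) := Nat.one_le_two_pow
        have hcast : ((2^(n+1) - 1 : ℕ) : ℝ) + 1 = 2^(n+1) := by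
          push_cast [h1]; ring
        rw [one_div, hcast]
      choose g hg hb using hch
      have haeν : ∀ᵐ x ∂(ν α), x ∈ R := by rw [ae_iff]; exact hν α
      have haeL : ∀ᵐ x ∂lam, x ∈ R := by rw [ae_iff]; exact hlam
      set E : ℕ → Set (EuclideanSpace ℝ (Fin d)) :=
        fun n => R ∩ (g n) ⁻¹' Ioi (1/2 : ℝ) with hE
      set F : ℕ → Set (EuclideanSpace ℝ (Fin d)) := fun n => R \ E n with hF
      have hEo : ∀ n, IsOpen (E n) := fun n =>
        (hg n).1.isOpen_inter_preimage hRo isOpen_Ioi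
      have hgν := fun n => hlp_facts hRo (ν α) (hν α) (hg n).1 (hg n).2
      have hgL := fun n => hlp_facts hRo lam hlam (hg n).1 (hg n).2
      have hboundν : ∀ n, ∫ x, g n x ∂(ν α) ≤ ((2:ℝ)^(n+1))⁻¹ := by
        intro n
        have h2 : 0 ≤ ∫ x, (1 - g n x) ∂lam := by
          rw [(hgL n).2.2.2]; linarith [(hgL n).2.2.1]
        linarith [hb n]
      have hboundL : ∀ n, ∫ x, (1 - g n x) ∂lam ≤ ((2:ℝ)^(n+1))⁻¹ := by
        intro n; linarith [hb n, (hgν n).2.1]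
      have hνE : ∀ n, ν α (E n) ≤ ENNReal.ofReal (2 * ((2:ℝ)^(n+1))⁻¹) := by
        intro n
        have := hlp_markov (ν α) (hgν n).1
          (haeν.mono fun x hx => ((hg n).2 hx).1) (hEo n).measurableSet
          (fun x hx => le_of_lt hx.2)
        exact this.trans (ENNReal.ofReal_le_ofReal (by linarith [hboundν n]))
      have hLF : ∀ n, lam (F n) ≤ ENNReal.ofReal (2 * ((2:ℝ)^(n+1))⁻¹) := by
        intro n
        have hint : Integrable (fun x => 1 - g n x) lam :=
          (integrable_const 1).sub (hgL n).1
        have h0 : 0 ≤ᵐ[lam] fun x => 1 - g n x :=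
          haeL.mono fun x hx => by have := ((hg n).2 hx).2; simp; linarith
        have hle : ∀ x ∈ F n, (1/2:ℝ) ≤ 1 - g n x := by
          rintro x ⟨hxR, hxE⟩
          have hgle : g n x ≤ 1/2 := by
            by_contra hc
            exact hxE ⟨hxR, by simpa using lt_of_not_ge hc⟩
          linarith
        have := hlp_markov lam hint h0
          (hRo.measurableSet.diff (hEo n).measurableSet) hle
        exact this.trans (ENNReal.ofReal_le_ofReal (by linarith [hboundL n]))
      have hgeo : ∑' n : ℕ, ENNReal.ofReal (2 * ((2:ℝ)^(n+1))⁻¹) ≠ ⊤ := by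
        have heq : ∀ n : ℕ, ENNReal.ofReal (2 * ((2:ℝ)^(n+1))⁻¹)
            = ENNReal.ofReal ((1/2:ℝ))^n := by
          intro n
          rw [← ENNReal.ofReal_pow (by norm_num)]
          congr 1
          rw [pow_succ]
          have h2n : (0:ℝ) < 2^n := by positivity
          field_simp
          rw [← mul_pow]; norm_num
        rw [tsum_congr heq, ENNReal.tsum_geometric]
        rw [Ne, ENNReal.inv_eq_top]
        intro hc
        rw [tsub_eq_zero_iff_le, ENNReal.one_le_ofReal] at hc
        linarith
      have hνS : ν α (limsup E atTop) = 0 := measure_limsup_atTop_eq_zero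
        (ne_top_of_le_ne_top hgeo (ENNReal.tsum_le_tsum hνE))
      have hLT : lam (limsup F atTop) = 0 := measure_limsup_atTop_eq_zero
        (ne_top_of_le_ne_top hgeo (ENNReal.tsum_le_tsum hLF))
      refine ⟨limsup E atTop ∪ Rᶜ, ?_, ?_, ?_⟩
      · exact (MeasurableSet.measurableSet_limsup fun n => (hEo n).measurableSet).union
          hRo.measurableSet.compl
      · exact measure_union_null hνS (hν α)
      · rw [compl_union, compl_compl]
        refine measure_mono_null ?_ hLT
        rintro x ⟨hxS, hxR⟩
        rw [mem_compl_iff, mem_limsup_iff_frequently_mem, Filter.not_frequently] at hxS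
        rw [mem_limsup_iff_frequently_mem]
        exact (hxS.mono fun n hn => show x ∈ F n from ⟨hxR, hn⟩).frequently
  rw [key]
  refine IsGδ.iInter fun n => IsOpen.isGδ ?_
  refine isOpen_iUnion fun f => isOpen_iUnion fun hf => ?_
  have hcont : ContinuousOn (fun x => 1 - f x) R := continuousOn_const.sub hf.1
  have hmaps : MapsTo (fun x => 1 - f x) R (Icc (0:ℝ) 1) := fun x hx => by
    have h1 := (hf.2 hx).1
    have h2 := (hf.2 hx).2
    show (1 - f x) ∈ Icc (0:ℝ) 1
    rw [mem_Icc]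
    constructor <;> linarith
  have hl := hlsc _ hcont hmaps
  have hset : {α : U | ∫ x, f x ∂(ν α) + ∫ x, (1 - f x) ∂lam < 1 / (n + 1)} =
      (fun α : U => ∫ x, (1 - f x) ∂(ν α)) ⁻¹'
        Ioi (1 - (1/((n:ℝ)+1) - ∫ x, (1 - f x) ∂lam)) := by
    ext α
    have h4 := (hlp_facts hRo (ν α) (hν α) hf.1 hf.2).2.2.2
    simp only [mem_setOf_eq, mem_preimage, mem_Ioi]
    rw [h4]
    constructor <;> intro <;> linarith
  rw [hset]
  exact hl.isOpen_preimage _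
end

section
/- Let U be a compact metric space, Ω a compact metric space, R an open ball in ℝ^d, Π : U × Ω → R continuous, μ a Radon probability measure on Ω, ν_α := (Π(α,·))_* μ, and λ a Radon measure with support contained in R. Then the set {α ∈ U : ν_α ⊥ λ} is a G_δ subset of U. -/
open MeasureTheory Set Metric Filter ENNReal Topology

lemma aux_open {d : ℕ} {U Ω : Type*} [MetricSpace U] [CompactSpace U]
    [MetricSpace Ω] [CompactSpace Ω] [MeasurableSpace Ω] [BorelSpace Ω]
    (Pi : U × Ω → EuclideanSpace ℝ (Fin d)) (hPi : Continuous Pi)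
    (μ : Measure Ω) [IsFiniteMeasure μ]
    (F : Set (EuclideanSpace ℝ (Fin d))) (hF : IsClosed F) (c : ℝ≥0∞) :
    IsOpen {α : U | μ ((fun ω => Pi (α, ω)) ⁻¹' F) < c} := by
  rw [Metric.isOpen_iff]
  intro α hα
  simp only [mem_setOf_eq] at hα
  set A : ℕ → Set Ω := fun n => (fun ω => Pi (α, ω)) ⁻¹' (cthickening (1/(n+1)) F) with hA
  have hcont : ∀ β : U, Continuous (fun ω => Pi (β, ω)) :=
    fun β => hPi.comp (Continuous.prodMk_right β)
  have hmeas : ∀ n, MeasurableSet (A n) := fun n =>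
    (isClosed_cthickening).measurableSet.preimage (hcont α).measurable
  have hanti : Antitone A := by
    intro m n hmn
    apply preimage_mono
    apply cthickening_mono
    apply one_div_le_one_div_of_le (by positivity)
    exact_mod_cast Nat.succ_le_succ hmn
  have key : F = ⋂ n : ℕ, cthickening (1/((n:ℝ)+1)) F := by
    conv_lhs => rw [← hF.closure_eq]
    rw [Metric.closure_eq_iInter_cthickening' F
      (Set.range fun n : ℕ => 1/((n:ℝ)+1)) ?_, biInter_range]
    intro ε hε
    obtain ⟨n, hn⟩ := exists_nat_one_div_lt hε
    exact ⟨1/((n:ℝ)+1), ⟨n, rfl⟩, by positivity, hn.le⟩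
  have hinter : ⋂ n, A n = (fun ω => Pi (α, ω)) ⁻¹' F := by
    rw [← preimage_iInter]
    exact congrArg _ key.symm
  have htend : Tendsto (fun n => μ (A n)) atTop (𝓝 (μ ((fun ω => Pi (α, ω)) ⁻¹' F))) := by
    rw [← hinter]
    exact tendsto_measure_iInter_atTop (fun n => (hmeas n).nullMeasurableSet) hanti
      ⟨0, measure_ne_top μ _⟩
  obtain ⟨n, hn⟩ := (htend.eventually (gt_mem_nhds hα)).exists
  have hu : UniformContinuous Pi := CompactSpace.uniformContinuous_of_continuous hPi
  obtain ⟨η, hη, hdist⟩ := Metric.uniformContinuous_iff.mp hu (1/((n:ℝ)+1)) (by positivity)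
  refine ⟨η, hη, fun β hβ => ?_⟩
  have hsub : (fun ω => Pi (β, ω)) ⁻¹' F ⊆ A n := by
    intro ω hω
    have h1 : dist (α, ω) (β, ω) < η := by
      simp only [Prod.dist_eq, dist_self, max_lt_iff]
      exact ⟨by rw [dist_comm]; exact mem_ball.mp hβ, hη⟩
    have h2 := hdist h1
    exact mem_cthickening_of_dist_le _ _ _ _ hω h2.le
  exact lt_of_le_of_lt (measure_mono hsub) hn

/-- With `Π : U × Ω → R` continuous on compact metric spaces, values in an
open ball `R ⊆ ℝ^d`, `μ` a Radon probability measure on `Ω`, `ν α := (Π(α,·))_* μ` and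
`lam` a Radon measure supported in `R`, the set of parameters of singularity
`{α | ν α ⊥ lam}` is a Gδ subset of `U`. -/
theorem stmt2 {d : ℕ} {U Ω : Type*} [MetricSpace U] [CompactSpace U]
    [MetricSpace Ω] [CompactSpace Ω] [MeasurableSpace Ω] [BorelSpace Ω]
    (c : EuclideanSpace ℝ (Fin d)) (rad : ℝ) (hrad : 0 < rad)
    (Pi : U × Ω → EuclideanSpace ℝ (Fin d)) (hPi : Continuous Pi)
    (hPiR : ∀ p, Pi p ∈ Metric.ball c rad)
    (μ : Measure Ω) [IsProbabilityMeasure μ] [μ.Regular]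
    (ν : U → Measure (EuclideanSpace ℝ (Fin d)))
    (hν : ∀ α, ν α = Measure.map (fun ω => Pi (α, ω)) μ)
    (lam : Measure (EuclideanSpace ℝ (Fin d))) [IsFiniteMeasure lam] [lam.Regular]
    (hlam : lam (Metric.ball c rad)ᶜ = 0) :
    IsGδ {α : U | (ν α).MutuallySingular lam} := by
  have hcont : ∀ β : U, Continuous (fun ω => Pi (β, ω)) :=
    fun β => hPi.comp (Continuous.prodMk_right β)
  set ε : ℕ → ℝ≥0∞ := fun n => (1/2 : ℝ≥0∞) ^ n with hε
  have hεpos : ∀ n, 0 < ε n := fun n => ENNReal.pow_pos (by norm_num) n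
  have hεtend : Tendsto ε atTop (𝓝 0) :=
    ENNReal.tendsto_pow_atTop_nhds_zero_of_lt_one (by norm_num)
  set S : ℕ → Set U := fun n =>
    {α | ∃ G : Set (EuclideanSpace ℝ (Fin d)), IsOpen G ∧ lam G < ε n ∧ ν α Gᶜ < ε n} with hS
  have hmapν : ∀ (α : U) (G : Set (EuclideanSpace ℝ (Fin d))), MeasurableSet G →
      ν α G = μ ((fun ω => Pi (α, ω)) ⁻¹' G) := by
    intro α G hG
    rw [hν α, Measure.map_apply (hcont α).measurable hG]
  have hSopen : ∀ n, IsOpen (S n) := by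
    intro n
    rw [isOpen_iff_mem_nhds]
    rintro α ⟨G, hGopen, hGlam, hGν⟩
    have hkey := aux_open Pi hPi μ Gᶜ hGopen.isClosed_compl (ε n)
    have hmem : α ∈ {β : U | μ ((fun ω => Pi (β, ω)) ⁻¹' Gᶜ) < ε n} := by
      rw [mem_setOf_eq, ← hmapν α Gᶜ hGopen.isClosed_compl.measurableSet]
      exact hGν
    filter_upwards [hkey.mem_nhds hmem] with β hβ
    exact ⟨G, hGopen, hGlam, by rwa [hmapν β Gᶜ hGopen.isClosed_compl.measurableSet]⟩
  have hset : {α : U | (ν α).MutuallySingular lam} = ⋂ n, S n := by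
    ext α
    simp only [mem_setOf_eq, mem_iInter]
    constructor
    · rintro ⟨s, hs, hνs, hlams⟩ n
      obtain ⟨G, hGsub, hGopen, hGlam⟩ :=
        sᶜ.exists_isOpen_lt_of_lt (ε n) (by rw [hlams]; exact hεpos n)
      refine ⟨G, hGopen, hGlam, ?_⟩
      have : Gᶜ ⊆ s := by
        rw [← compl_compl s]
        exact compl_subset_compl.mpr hGsub
      calc ν α Gᶜ ≤ ν α s := measure_mono this
        _ = 0 := hνs
        _ < ε n := hεpos n
    · intro h
      choose G hGopen hGlam hGν using h
      refine ⟨⋃ N : ℕ, ⋂ (n : ℕ) (_ : N ≤ n), (G n)ᶜ, ?_, ?_, ?_⟩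
      · exact MeasurableSet.iUnion fun N => MeasurableSet.iInter fun n =>
          MeasurableSet.iInter fun _ => (hGopen n).isClosed_compl.measurableSet
      · refine measure_iUnion_null fun N => ?_
        have hle : ∀ M, N ≤ M → ν α (⋂ (n : ℕ) (_ : N ≤ n), (G n)ᶜ) ≤ ε M := by
          intro M hM
          refine le_trans (measure_mono ?_) (hGν M).le
          exact iInter₂_subset M hM
        have h0 : ν α (⋂ (n : ℕ) (_ : N ≤ n), (G n)ᶜ) ≤ 0 := by
          refine ge_of_tendsto hεtend ?_
          filter_upwards [eventually_ge_atTop N] with M hM using hle M hM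
        exact le_antisymm h0 zero_le
      · rw [compl_iUnion]
        have hsub : ∀ N : ℕ, (⋂ N : ℕ, (⋂ (n : ℕ) (_ : N ≤ n), (G n)ᶜ)ᶜ) ⊆
            ⋃ k : ℕ, G (N + k) := by
          intro N x hx
          have := mem_iInter.mp hx N
          rw [compl_iInter] at this
          obtain ⟨n, hn⟩ := mem_iUnion.mp this
          rw [compl_iInter] at hn
          obtain ⟨hNn, hxn⟩ := mem_iUnion.mp hn
          rw [compl_compl] at hxn
          exact mem_iUnion.mpr ⟨n - N, by rwa [Nat.add_sub_cancel' hNn]⟩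
        have hbound : ∀ N : ℕ, lam (⋂ N : ℕ, (⋂ (n : ℕ) (_ : N ≤ n), (G n)ᶜ)ᶜ) ≤ 2 * ε N := by
          intro N
          calc lam _ ≤ lam (⋃ k : ℕ, G (N + k)) := measure_mono (hsub N)
            _ ≤ ∑' k : ℕ, lam (G (N + k)) := measure_iUnion_le _
            _ ≤ ∑' k : ℕ, ε (N + k) := ENNReal.tsum_le_tsum fun k => (hGlam (N + k)).le
            _ = ε N * ∑' k : ℕ, ε k := by
                rw [← ENNReal.tsum_mul_left]
                congr 1 with k
                exact pow_add (1/2 : ℝ≥0∞) N k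
            _ = ε N * 2 := by
                rw [hε, ENNReal.tsum_geometric]
                norm_num
            _ = 2 * ε N := mul_comm _ _
        have h2tend : Tendsto (fun N => 2 * ε N) atTop (𝓝 0) := by
          have := ENNReal.Tendsto.const_mul (a := 2) hεtend
            (Or.inr (by norm_num : (2:ℝ≥0∞) ≠ ⊤))
          simpa using this
        have h0 : lam (⋂ N : ℕ, (⋂ (n : ℕ) (_ : N ≤ n), (G n)ᶜ)ᶜ) ≤ 0 := by
          refine ge_of_tendsto h2tend ?_
          filter_upwards with N using hbound N
        exact le_antisymm h0 zero_le
  rw [hset]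
  exact IsGδ.iInter_of_isOpen fun n => hSopen n
end

section
/- Let U be a compact metric space and for each α ∈ U let ν_α be a Radon probability measure on a bounded open set R ⊆ ℝ^d such that α ↦ ∫ f dν_α is continuous for each continuous f : R → [0,1]. Let λ be a Radon probability measure on R. Then either {α : ν_α ⊥ λ} is nowhere dense in U, or, if U ⊆ ℝ^k has nonempty interior contained in the closure of the singularity set, the packing dimension of {α : ν_α ⊥ λ} equals k. -/
open Set Filter MeasureTheory
open Metric

noncomputable def coveringNumber {X : Type*} [PseudoMetricSpace X] (E : Set X) (δ : ℝ) :
    ENNReal :=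
  ⨅ (s : Finset X) (_ : E ⊆ ⋃ x ∈ s, Metric.ball x δ), (s.card : ENNReal)

noncomputable def upperBoxDim {X : Type*} [PseudoMetricSpace X] (E : Set X) : EReal :=
  limsup (fun δ : ℝ => ENNReal.log (coveringNumber E δ) / ((- Real.log δ : ℝ) : EReal))
    (nhdsWithin 0 (Ioi 0))

noncomputable def packingDim {X : Type*} [PseudoMetricSpace X] (H : Set X) : EReal :=
  ⨅ (E : ℕ → Set X) (_ : H ⊆ ⋃ i, E i), ⨆ i, upperBoxDim (E i)

lemma coveringNumber_mono {X : Type*} [PseudoMetricSpace X] {E F : Set X} (h : E ⊆ F) (δ : ℝ) :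
    coveringNumber E δ ≤ coveringNumber F δ := by
  refine le_iInf₂ fun s hs => ?_
  exact iInf₂_le s (h.trans hs)

lemma coveringNumber_le_card {X : Type*} [PseudoMetricSpace X] {E : Set X} {δ : ℝ}
    {s : Finset X} (hs : E ⊆ ⋃ x ∈ s, Metric.ball x δ) :
    coveringNumber E δ ≤ s.card :=
  iInf₂_le s hs

/-- upper bound on covering numbers of a closed ball in ℝ^k -/
lemma coveringNumber_closedBall_le (k : ℕ) (Rad : ℝ) (hR : 0 ≤ Rad) {δ : ℝ} (hδ : 0 < δ) :
    coveringNumber (closedBall (0 : EuclideanSpace ℝ (Fin k)) Rad) δ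
      ≤ ENNReal.ofReal ((2 * (Rad + δ) / δ) ^ k) := by
  rcases Nat.eq_zero_or_pos k with hk | hk
  · subst hk
    have : coveringNumber (closedBall (0 : EuclideanSpace ℝ (Fin 0)) Rad) δ ≤ (({0} : Finset (EuclideanSpace ℝ (Fin 0))).card : ENNReal) := by
      refine coveringNumber_le_card fun x _ => ?_
      simp only [Finset.mem_singleton, mem_iUnion]
      exact ⟨0, rfl, by simpa [Subsingleton.elim x (0 : EuclideanSpace ℝ (Fin 0))] using hδ⟩
    simpa using this
  ·
    classical
    set X := EuclideanSpace ℝ (Fin k)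
    haveI : Nontrivial X := Module.nontrivial_of_finrank_pos (R := ℝ)
      (by rw [finrank_euclideanSpace, Fintype.card_fin]; exact hk)
    set v : ENNReal := volume (ball (0:X) 1) with hv
    have hvpos : 0 < v := measure_ball_pos _ _ one_pos
    have hvfin : v < ⊤ := measure_ball_lt_top
    -- separated sets have bounded card
    have hcard : ∀ s : Finset X, (↑s : Set X) ⊆ closedBall 0 Rad →
        ((↑s : Set X).Pairwise fun a b => δ ≤ dist a b) →
        (s.card : ENNReal) ≤ ENNReal.ofReal ((2*(Rad+δ)/δ)^k) := by
      intro s hsub hsep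
      have hdisj : PairwiseDisjoint (↑s : Set X) (fun a => ball a (δ/2)) := by
        intro a ha b hb hab
        exact ball_disjoint_ball (by linarith [hsep ha hb hab])
      have hmeas : ∑ a ∈ s, volume (ball a (δ/2)) = volume (⋃ a ∈ s, ball a (δ/2)) :=
        (measure_biUnion_finset hdisj fun a _ => measurableSet_ball).symm
      have hsub2 : (⋃ a ∈ s, ball a (δ/2)) ⊆ ball (0:X) (Rad + δ) := by
        refine iUnion₂_subset fun a ha => ?_
        intro x hx
        have := hsub ha
        simp only [mem_ball, mem_closedBall] at *
        calc dist x 0 ≤ dist x a + dist a 0 := dist_triangle _ _ _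
          _ < δ/2 + Rad := by linarith
          _ ≤ Rad + δ := by linarith
      have hball : ∀ a : X, volume (ball a (δ/2)) = ENNReal.ofReal ((δ/2)^k) * v := by
        intro a
        rw [hv, Measure.addHaar_ball _ _ (by linarith : (0:ℝ) ≤ δ/2)]
        congr 2
        rw [finrank_euclideanSpace, Fintype.card_fin]
      have hballR : volume (ball (0:X) (Rad+δ)) = ENNReal.ofReal ((Rad+δ)^k) * v := by
        rw [hv, Measure.addHaar_ball _ _ (by linarith : (0:ℝ) ≤ Rad+δ)]
        congr 2
        rw [finrank_euclideanSpace, Fintype.card_fin]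
      have key : (s.card : ENNReal) * (ENNReal.ofReal ((δ/2)^k) * v) ≤ ENNReal.ofReal ((Rad+δ)^k) * v := by
        calc (s.card : ENNReal) * (ENNReal.ofReal ((δ/2)^k) * v)
            = ∑ a ∈ s, volume (ball a (δ/2)) := by
              simp [hball, Finset.sum_const, mul_comm, mul_assoc]
          _ = volume (⋃ a ∈ s, ball a (δ/2)) := hmeas
          _ ≤ volume (ball (0:X) (Rad+δ)) := measure_mono hsub2
          _ = _ := hballR
      -- cancel
      have hpos : (0:ℝ) < (δ/2)^k := pow_pos (by linarith) k
      have h1 : (ENNReal.ofReal ((δ/2)^k) * v) ≠ 0 := by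
        simp only [ne_eq, mul_eq_zero, not_or]
        exact ⟨by simp [ENNReal.ofReal_eq_zero, not_le, hpos], hvpos.ne'⟩
      have h2 : (ENNReal.ofReal ((δ/2)^k) * v) ≠ ⊤ := by
        exact ENNReal.mul_ne_top ENNReal.ofReal_ne_top hvfin.ne
      have := (ENNReal.le_div_iff_mul_le (Or.inl h1) (Or.inl h2)).2 key
      refine this.trans ?_
      rw [ENNReal.mul_div_mul_right _ _ hvpos.ne' hvfin.ne]
      rw [← ENNReal.ofReal_div_of_pos hpos]
      apply ENNReal.ofReal_le_ofReal
      rw [← div_pow]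
      apply pow_le_pow_left₀ (by positivity)
      rw [show (Rad + δ) / (δ / 2) = 2*(Rad+δ)/δ by field_simp]
    -- maximal separated set
    set A : Set ℕ := {n | ∃ s : Finset X, (↑s : Set X) ⊆ closedBall 0 Rad ∧
      ((↑s : Set X).Pairwise fun a b => δ ≤ dist a b) ∧ s.card = n} with hA
    have hAne : A.Nonempty := ⟨0, ∅, by simp, by simp, rfl⟩
    have hAbdd : BddAbove A := by
      refine ⟨⌈(2*(Rad+δ)/δ)^k⌉₊, fun n hn => ?_⟩
      obtain ⟨s, h1, h2, h3⟩ := hn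
      have hxr : ((n:ℕ):ENNReal) ≤ ENNReal.ofReal ((2*(Rad+δ)/δ)^k) := h3 ▸ hcard s h1 h2
      have hx : (0:ℝ) ≤ (2*(Rad+δ)/δ)^k := by positivity
      rw [← ENNReal.ofReal_natCast n, ENNReal.ofReal_le_ofReal_iff hx] at hxr
      have := hxr.trans (Nat.le_ceil _)
      exact_mod_cast this
    obtain ⟨s, hs1, hs2, hs3⟩ := Nat.sSup_mem hAne hAbdd
    have hcover : closedBall (0:X) Rad ⊆ ⋃ a ∈ s, ball a δ := by
      by_contra hcon
      rw [not_subset] at hcon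
      obtain ⟨y, hy, hy2⟩ := hcon
      simp only [mem_iUnion, mem_ball, not_exists] at hy2
      have hys : y ∉ s := fun h => absurd hδ (by simpa using hy2 y h)
      have : s.card + 1 ∈ A := by
        refine ⟨insert y s, ?_, ?_, by rw [Finset.card_insert_of_notMem hys]⟩
        · intro x hx
          simp only [Finset.coe_insert, mem_insert_iff] at hx
          rcases hx with rfl | hx
          · exact hy
          · exact hs1 hx
        · rw [Finset.coe_insert]
          refine Set.Pairwise.insert hs2 fun b hb hby => ?_
          have hd : δ ≤ dist y b := not_lt.1 (hy2 b hb)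
          exact ⟨hd, by rwa [dist_comm]⟩
      have := le_csSup hAbdd this
      rw [hs3] at this
      omega
    calc coveringNumber (closedBall (0:X) Rad) δ ≤ s.card := coveringNumber_le_card hcover
      _ ≤ _ := hcard s hs1 hs2

lemma le_coveringNumber_of_ball_subset_closure {k : ℕ} {E : Set (EuclideanSpace ℝ (Fin k))}
    {x : EuclideanSpace ℝ (Fin k)} {r δ : ℝ} (hr : 0 < r) (hδ : 0 < δ)
    (h : ball x r ⊆ closure E) :
    ENNReal.ofReal ((r/2/δ)^k) ≤ coveringNumber E δ := by
  classical
  refine le_iInf₂ fun s hs => ?_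
  have hclos : closure E ⊆ ⋃ a ∈ s, closedBall a δ := by
    refine closure_minimal (hs.trans (iUnion₂_mono fun a _ => ball_subset_closedBall)) ?_
    exact Set.Finite.isClosed_biUnion s.finite_toSet fun a _ => isClosed_closedBall
  have hball : ball x r ⊆ ⋃ a ∈ s, ball a (2*δ) := by
    refine (h.trans hclos).trans (iUnion₂_mono fun a _ => ?_)
    exact closedBall_subset_ball (by linarith)
  rcases Nat.eq_zero_or_pos k with hk | hk
  · subst hk
    have hne : s.Nonempty := by
      have hy := mem_ball_self (x := x) hr
      set y := x
      obtain ⟨a, ha, -⟩ := mem_iUnion₂.1 (hball hy)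
      exact ⟨a, ha⟩
    have : 1 ≤ s.card := Finset.card_pos.2 hne
    simpa using (by exact_mod_cast this : (1:ENNReal) ≤ s.card)
  · haveI : Nontrivial (EuclideanSpace ℝ (Fin k)) := Module.nontrivial_of_finrank_pos (R := ℝ)
      (by rw [finrank_euclideanSpace, Fintype.card_fin]; exact hk)
    set v : ENNReal := volume (ball (0:EuclideanSpace ℝ (Fin k)) 1) with hv
    have hvpos : 0 < v := measure_ball_pos _ _ one_pos
    have hvfin : v < ⊤ := measure_ball_lt_top
    have hbvol : ∀ (a : EuclideanSpace ℝ (Fin k)) (ρ : ℝ), 0 ≤ ρ → volume (ball a ρ) = ENNReal.ofReal (ρ^k) * v := by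
      intro a ρ hρ
      rw [hv, Measure.addHaar_ball _ _ hρ]
      congr 2
      rw [finrank_euclideanSpace, Fintype.card_fin]
    have key : ENNReal.ofReal (r^k) * v ≤ (s.card : ENNReal) * (ENNReal.ofReal ((2*δ)^k) * v) := by
      calc ENNReal.ofReal (r^k) * v = volume (ball x r) := (hbvol x r hr.le).symm
        _ ≤ volume (⋃ a ∈ s, ball a (2*δ)) := measure_mono hball
        _ ≤ ∑ a ∈ s, volume (ball a (2*δ)) := measure_biUnion_finset_le s _
        _ = ∑ _a ∈ s, (ENNReal.ofReal ((2*δ)^k) * v) :=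
            Finset.sum_congr rfl fun a _ => hbvol a (2*δ) (by linarith)
        _ = (s.card : ENNReal) * (ENNReal.ofReal ((2*δ)^k) * v) := by
            rw [Finset.sum_const, nsmul_eq_mul]
    have hpos : (0:ℝ) < (2*δ)^k := by positivity
    have h1 : (ENNReal.ofReal ((2*δ)^k) * v) ≠ 0 := by
      simp only [ne_eq, mul_eq_zero, not_or]
      exact ⟨by simp [ENNReal.ofReal_eq_zero, not_le, hpos], hvpos.ne'⟩
    have h2 : (ENNReal.ofReal ((2*δ)^k) * v) ≠ ⊤ :=
      ENNReal.mul_ne_top ENNReal.ofReal_ne_top hvfin.ne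
    have := (ENNReal.div_le_iff_le_mul (Or.inl h1) (Or.inl h2)).2 key
    refine le_trans (le_of_eq ?_) this
    rw [ENNReal.mul_div_mul_right _ _ hvpos.ne' hvfin.ne,
      ← ENNReal.ofReal_div_of_pos hpos, ← div_pow]
    congr 2
    field_simp

lemma tendsto_log_ratio (k : ℕ) (c : ℝ) :
    Tendsto (fun δ : ℝ => (((k : ℝ) * (Real.log c - Real.log δ) / (- Real.log δ) : ℝ) : EReal))
      (nhdsWithin 0 (Ioi 0)) (nhds ((k : ℕ) : EReal)) := by
  have h1 : Tendsto (fun δ : ℝ => - Real.log δ) (nhdsWithin 0 (Ioi 0)) atTop :=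
    tendsto_neg_atBot_atTop.comp Real.tendsto_log_nhdsGT_zero
  have h2 : Tendsto (fun δ : ℝ => ((k:ℝ) * Real.log c) * (- Real.log δ)⁻¹ + (k:ℝ))
      (nhdsWithin 0 (Ioi 0)) (nhds ((k:ℝ))) := by
    have := (h1.inv_tendsto_atTop).const_mul ((k:ℝ) * Real.log c)
    simpa using this.add_const (k:ℝ)
  have heq : ∀ᶠ δ : ℝ in nhdsWithin 0 (Ioi 0),
      ((k : ℝ) * (Real.log c - Real.log δ) / (- Real.log δ) : ℝ)
        = ((k:ℝ) * Real.log c) * (- Real.log δ)⁻¹ + (k:ℝ) := by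
    filter_upwards [Ioo_mem_nhdsGT_of_mem (by norm_num : (0:ℝ) ∈ Ico (0:ℝ) 1)] with δ hδ
    have hlog : Real.log δ < 0 := Real.log_neg hδ.1 hδ.2
    have hne : -Real.log δ ≠ 0 := by simpa using hlog.ne
    have hne2 : Real.log δ ≠ 0 := hlog.ne
    rw [div_eq_iff hne]
    field_simp [hne2]
    ring
  have h3 : Tendsto (fun δ : ℝ => ((k : ℝ) * (Real.log c - Real.log δ) / (- Real.log δ) : ℝ))
      (nhdsWithin 0 (Ioi 0)) (nhds ((k:ℝ))) := h2.congr' (heq.mono fun δ h => h.symm)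
  have : ((k:ℕ) : EReal) = (((k:ℝ)) : EReal) := by
    simp [EReal.coe_coe_eq_natCast]
  rw [this]
  exact (EReal.tendsto_coe).2 h3

lemma upperBoxDim_le_of_subset_closedBall {k : ℕ} {E : Set (EuclideanSpace ℝ (Fin k))}
    {Rad : ℝ} (hR : 0 < Rad) (hE : E ⊆ closedBall (0 : EuclideanSpace ℝ (Fin k)) Rad) :
    upperBoxDim E ≤ (k : EReal) := by
  have hupper : ∀ᶠ δ : ℝ in nhdsWithin 0 (Ioi 0),
      ENNReal.log (coveringNumber E δ) / ((- Real.log δ : ℝ) : EReal)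
        ≤ (((k : ℝ) * (Real.log (4*Rad) - Real.log δ) / (- Real.log δ) : ℝ) : EReal) := by
    filter_upwards [Ioo_mem_nhdsGT_of_mem
      (by constructor <;> [norm_num; positivity] : (0:ℝ) ∈ Ico (0:ℝ) (min Rad 1))] with δ hδ
    obtain ⟨hδ0, hδ1⟩ := hδ
    have hδR : δ < Rad := lt_of_lt_of_le hδ1 (min_le_left _ _)
    have hδ1' : δ < 1 := lt_of_lt_of_le hδ1 (min_le_right _ _)
    have hpos : (0:ℝ) < (4*Rad/δ)^k := by positivity
    have hcov : coveringNumber E δ ≤ ENNReal.ofReal ((4*Rad/δ)^k) := by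
      refine (coveringNumber_mono hE δ).trans
        ((coveringNumber_closedBall_le k Rad hR.le hδ0).trans (ENNReal.ofReal_le_ofReal ?_))
      apply pow_le_pow_left₀ (by positivity)
      exact div_le_div_of_nonneg_right (by linarith) hδ0.le
    have hlogcov : ENNReal.log (coveringNumber E δ)
        ≤ (((k : ℝ) * (Real.log (4*Rad) - Real.log δ) : ℝ) : EReal) := by
      calc ENNReal.log (coveringNumber E δ) ≤ ENNReal.log (ENNReal.ofReal ((4*Rad/δ)^k)) :=
            ENNReal.log_monotone hcov
        _ = ((Real.log ((4*Rad/δ)^k) : ℝ) : EReal) := by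
            rw [ENNReal.log_ofReal, if_neg (not_le.2 hpos)]
        _ = _ := by
            rw [Real.log_pow, Real.log_div (by positivity) hδ0.ne']
    have h0 : (0:EReal) ≤ ((-Real.log δ : ℝ) : EReal) := by
      have : Real.log δ ≤ 0 := Real.log_nonpos hδ0.le hδ1'.le
      exact_mod_cast neg_nonneg.2 this
    exact (EReal.div_le_div_right_of_nonneg h0 hlogcov).trans_eq (EReal.coe_div _ _).symm
  calc upperBoxDim E ≤ limsup (fun δ : ℝ =>
        (((k : ℝ) * (Real.log (4*Rad) - Real.log δ) / (- Real.log δ) : ℝ) : EReal))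
        (nhdsWithin 0 (Ioi 0)) := limsup_le_limsup hupper
    _ = (k : EReal) := (tendsto_log_ratio k (4*Rad)).limsup_eq

lemma le_upperBoxDim_of_ball_subset_closure {k : ℕ} {E : Set (EuclideanSpace ℝ (Fin k))}
    {x : EuclideanSpace ℝ (Fin k)} {r : ℝ} (hr : 0 < r) (h : ball x r ⊆ closure E) :
    (k : EReal) ≤ upperBoxDim E := by
  have hlower : ∀ᶠ δ : ℝ in nhdsWithin 0 (Ioi 0),
      (((k : ℝ) * (Real.log (r/2) - Real.log δ) / (- Real.log δ) : ℝ) : EReal)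
        ≤ ENNReal.log (coveringNumber E δ) / ((- Real.log δ : ℝ) : EReal) := by
    filter_upwards [Ioo_mem_nhdsGT_of_mem
      (by constructor <;> [norm_num; positivity] : (0:ℝ) ∈ Ico (0:ℝ) (min r 1))] with δ hδ
    obtain ⟨hδ0, hδ1⟩ := hδ
    have hδ1' : δ < 1 := lt_of_lt_of_le hδ1 (min_le_right _ _)
    have hpos : (0:ℝ) < (r/2/δ)^k := by positivity
    have hcov : ENNReal.ofReal ((r/2/δ)^k) ≤ coveringNumber E δ :=
      le_coveringNumber_of_ball_subset_closure hr hδ0 h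
    have hlogcov : (((k : ℝ) * (Real.log (r/2) - Real.log δ) : ℝ) : EReal)
        ≤ ENNReal.log (coveringNumber E δ) := by
      calc (((k : ℝ) * (Real.log (r/2) - Real.log δ) : ℝ) : EReal)
          = ((Real.log ((r/2/δ)^k) : ℝ) : EReal) := by
            rw [Real.log_pow, Real.log_div (by positivity) hδ0.ne']
        _ = ENNReal.log (ENNReal.ofReal ((r/2/δ)^k)) := by
            rw [ENNReal.log_ofReal, if_neg (not_le.2 hpos)]
        _ ≤ _ := ENNReal.log_monotone hcov
    have h0 : (0:EReal) ≤ ((-Real.log δ : ℝ) : EReal) := by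
      have : Real.log δ ≤ 0 := Real.log_nonpos hδ0.le hδ1'.le
      exact_mod_cast neg_nonneg.2 this
    exact le_trans (le_of_eq (EReal.coe_div _ _)) (EReal.div_le_div_right_of_nonneg h0 hlogcov)
  calc (k : EReal) = limsup (fun δ : ℝ =>
        (((k : ℝ) * (Real.log (r/2) - Real.log δ) / (- Real.log δ) : ℝ) : EReal))
        (nhdsWithin 0 (Ioi 0)) := ((tendsto_log_ratio k (r/2)).limsup_eq).symm
    _ ≤ upperBoxDim E := limsup_le_limsup hlower

lemma packingDim_le_upperBoxDim {X : Type*} [PseudoMetricSpace X] (H : Set X) :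
    packingDim H ≤ upperBoxDim H := by
  refine le_trans (iInf₂_le (fun _ : ℕ => H) ?_) ?_
  · intro x hx
    exact mem_iUnion.2 ⟨0, hx⟩
  · simp

lemma le_packingDim {X : Type*} [PseudoMetricSpace X] {H : Set X} {c : EReal}
    (h : ∀ E : ℕ → Set X, H ⊆ ⋃ i, E i → ∃ i, c ≤ upperBoxDim (E i)) :
    c ≤ packingDim H := by
  refine le_iInf₂ fun E hE => ?_
  obtain ⟨i, hi⟩ := h E hE
  exact hi.trans (le_iSup (fun i => upperBoxDim (E i)) i)

lemma baire_key {X : Type*} [MetricSpace X] [BaireSpace X]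
    {V S : Set X} (hV : IsOpen V) (hVne : V.Nonempty) (hdense : V ⊆ closure S)
    {O : ℕ → Set X} (hO : ∀ m, IsOpen (O m)) (hsub : S ⊆ ⋂ m, O m)
    (hsup : (⋂ m, O m) ∩ V ⊆ S)
    (E : ℕ → Set X) (hE : S ⊆ ⋃ i, E i) :
    ∃ i x r, 0 < r ∧ ball x r ⊆ closure (E i) := by
  by_contra hcon
  push_neg at hcon
  have hnd : ∀ i, Dense (closure (E i))ᶜ := by
    intro i
    rw [← interior_eq_empty_iff_dense_compl]
    by_contra hne
    obtain ⟨x, hx⟩ := nonempty_iff_ne_empty.2 hne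
    obtain ⟨r, hr, hball⟩ := Metric.isOpen_iff.1 isOpen_interior x hx
    exact absurd (hball.trans interior_subset) (hcon i x r hr)
  set W : ℕ ⊕ ℕ → Set X :=
    Sum.elim (fun m => (O m ∩ V) ∪ (closure V)ᶜ) (fun i => (closure (E i))ᶜ) with hW
  have hWo : ∀ j, IsOpen (W j) := by
    rintro (m | i)
    · exact (((hO m).inter hV).union isClosed_closure.isOpen_compl)
    · exact isClosed_closure.isOpen_compl
  have hWd : ∀ j, Dense (W j) := by
    rintro (m | i)
    · have h1 : V ⊆ closure ((O m ∩ V) ∪ (closure V)ᶜ) := by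
        intro y hy
        refine closure_mono ?_ (hV.inter_closure ⟨hy, hdense hy⟩)
        intro z hz
        exact Or.inl ⟨(mem_iInter.1 (hsub hz.2)) m, hz.1⟩
      intro x
      by_cases hx : x ∈ closure V
      · exact (closure_minimal h1 isClosed_closure) hx
      · exact subset_closure (Or.inr hx)
    · exact hnd i
  have hd := dense_iInter_of_isOpen hWo hWd
  obtain ⟨x, hxV, hxW⟩ := hd.inter_open_nonempty V hV hVne
  have hxO : x ∈ ⋂ m, O m := by
    refine mem_iInter.2 fun m => ?_
    have := mem_iInter.1 hxW (Sum.inl m)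
    rcases this with h | h
    · exact h.1
    · exact absurd (subset_closure hxV) h
  obtain ⟨i, hxE⟩ := mem_iUnion.1 (hE (hsup ⟨hxO, hxV⟩))
  exact (mem_iInter.1 hxW (Sum.inr i)) (subset_closure hxE)

lemma sing_iff {d : ℕ} (R : Set (EuclideanSpace ℝ (Fin d))) (hRb : Bornology.IsBounded R)
    (hRo : IsOpen R) (μ lam : Measure (EuclideanSpace ℝ (Fin d)))
    [IsProbabilityMeasure μ] [μ.Regular] [IsProbabilityMeasure lam] [lam.Regular]
    (hμR : μ Rᶜ = 0) (hlamR : lam Rᶜ = 0) :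
    μ.MutuallySingular lam ↔ ∀ m : ℕ, ∃ f : EuclideanSpace ℝ (Fin d) → ℝ,
      Continuous f ∧ (∀ x, f x ∈ Icc (0:ℝ) 1) ∧
        ∫ x, f x ∂μ + ∫ x, (1 - f x) ∂lam < (1/2:ℝ)^m := by
  constructor
  · rintro ⟨t, htm, hμt, hlamtc⟩ m
    set ε : ℝ := (1/2:ℝ)^m with hε
    have hεpos : 0 < ε := by rw [hε]; positivity
    set A : Set (EuclideanSpace ℝ (Fin d)) := t ∩ R with hA
    have hAm : MeasurableSet A := htm.inter hRo.measurableSet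
    have hlamAc : lam Aᶜ = 0 := by
      rw [hA, Set.compl_inter]
      exact measure_union_null hlamtc hlamR
    have h4 : (ENNReal.ofReal (ε/4)) ≠ 0 := by
      simp only [ne_eq, ENNReal.ofReal_eq_zero, not_le]
      linarith [hεpos]
    -- compact K ⊆ A with lam Kᶜ small
    obtain ⟨O', hO'sub, hO'open, hO'meas⟩ :=
      Set.exists_isOpen_lt_add Aᶜ (measure_ne_top lam _) h4
    rw [hlamAc, zero_add] at hO'meas
    set K : Set (EuclideanSpace ℝ (Fin d)) := O'ᶜ with hK
    have hKA : K ⊆ A := compl_subset_comm.1 hO'sub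
    have hKcomp : IsCompact K := Metric.isCompact_of_isClosed_isBounded
      hO'open.isClosed_compl (hRb.subset (hKA.trans Set.inter_subset_right))
    have hlamKc : lam Kᶜ < ENNReal.ofReal (ε/4) := by rwa [hK, compl_compl]
    have hμK : μ K = 0 := measure_mono_null (hKA.trans Set.inter_subset_left) hμt
    -- open O ⊇ K with μ O small
    obtain ⟨O, hOsub, hOopen, hOmeas⟩ :=
      Set.exists_isOpen_lt_add K (measure_ne_top μ _) h4
    rw [hμK, zero_add] at hOmeas
    -- Urysohn
    obtain ⟨f, hf0, hf1, hficc⟩ := exists_continuous_zero_one_of_isClosed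
      hOopen.isClosed_compl hKcomp.isClosed (disjoint_compl_left.mono_right hOsub)
    refine ⟨f, f.continuous, hficc, ?_⟩
    have hintμ : Integrable (⇑f) μ := by
      refine (integrable_const (1:ℝ)).mono' f.continuous.aestronglyMeasurable ?_
      exact ae_of_all _ fun x => by
        rw [Real.norm_eq_abs, abs_le]
        exact ⟨by linarith [(hficc x).1], by simpa using (hficc x).2⟩
    have hle1 : ∫ x, f x ∂μ ≤ (μ O).toReal := by
      have hind : Integrable (O.indicator fun _ => (1:ℝ)) μ :=
        (integrable_const (1:ℝ)).indicator hOopen.measurableSet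
      have hmono : ∀ x, f x ≤ O.indicator (fun _ => (1:ℝ)) x := by
        intro x
        by_cases hx : x ∈ O
        · rw [Set.indicator_of_mem hx]; exact (hficc x).2
        · rw [Set.indicator_of_notMem hx]
          exact le_of_eq (hf0 hx)
      calc ∫ x, f x ∂μ ≤ ∫ x, O.indicator (fun _ => (1:ℝ)) x ∂μ :=
            integral_mono hintμ hind hmono
        _ = (μ O).toReal := by rw [integral_indicator_const _ hOopen.measurableSet]; simp [measureReal_def]
    have hintlam : Integrable (⇑f) lam := by
      refine (integrable_const (1:ℝ)).mono' f.continuous.aestronglyMeasurable ?_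
      exact ae_of_all _ fun x => by
        rw [Real.norm_eq_abs, abs_le]
        exact ⟨by linarith [(hficc x).1], by simpa using (hficc x).2⟩
    have hle2 : ∫ x, (1 - f x) ∂lam ≤ (lam Kᶜ).toReal := by
      have hind : Integrable (Kᶜ.indicator fun _ => (1:ℝ)) lam :=
        (integrable_const (1:ℝ)).indicator hKcomp.isClosed.measurableSet.compl
      have hmono : ∀ x, 1 - f x ≤ Kᶜ.indicator (fun _ => (1:ℝ)) x := by
        intro x
        by_cases hx : x ∈ K
        · rw [Set.indicator_of_notMem (by simpa using hx)]
          have := hf1 hx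
          simp only [Pi.one_apply] at this
          linarith [this]
        · rw [Set.indicator_of_mem (by simpa using hx)]
          linarith [(hficc x).1]
      calc ∫ x, (1 - f x) ∂lam ≤ ∫ x, Kᶜ.indicator (fun _ => (1:ℝ)) x ∂lam :=
            integral_mono ((integrable_const (1:ℝ)).sub hintlam) hind hmono
        _ = (lam Kᶜ).toReal := by
            rw [integral_indicator_const _ hKcomp.isClosed.measurableSet.compl]; simp [measureReal_def]
    have h1 : (μ O).toReal < ε/4 :=
      ENNReal.toReal_lt_of_lt_ofReal hOmeas
    have h2 : (lam Kᶜ).toReal < ε/4 :=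
      ENNReal.toReal_lt_of_lt_ofReal hlamKc
    linarith
  · intro h
    choose f hf1 hf2 hf3 using h
    have hnn : ∀ m, (0:ℝ) ≤ ∫ x, (1 - f m x) ∂lam :=
      fun m => integral_nonneg fun x => by
        simpa using (by linarith [(hf2 m x).2] : (0:ℝ) ≤ 1 - f m x)
    have hnn2 : ∀ m, (0:ℝ) ≤ ∫ x, f m x ∂μ :=
      fun m => integral_nonneg fun x => by simpa using (hf2 m x).1
    have hintμ : ∀ m, Integrable (f m) μ := by
      intro m
      refine (integrable_const (1:ℝ)).mono' (hf1 m).aestronglyMeasurable ?_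
      exact ae_of_all _ fun x => by
        rw [Real.norm_eq_abs, abs_le]
        exact ⟨by linarith [(hf2 m x).1], (hf2 m x).2⟩
    have hintlam : ∀ m, Integrable (f m) lam := by
      intro m
      refine (integrable_const (1:ℝ)).mono' (hf1 m).aestronglyMeasurable ?_
      exact ae_of_all _ fun x => by
        rw [Real.norm_eq_abs, abs_le]
        exact ⟨by linarith [(hf2 m x).1], (hf2 m x).2⟩
    -- a.e. convergence from summability
    have key : ∀ (κ : Measure (EuclideanSpace ℝ (Fin d))) (g : ℕ → EuclideanSpace ℝ (Fin d) → ℝ),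
        (∀ m, Measurable (g m)) → (∀ m x, 0 ≤ g m x) →
        (∀ m, ∫⁻ x, ENNReal.ofReal (g m x) ∂κ ≤ (2⁻¹ : ENNReal)^m) →
        ∀ᵐ x ∂κ, Tendsto (fun m => g m x) atTop (nhds (0:ℝ)) := by
      intro κ g hgm hgnn hgs
      have hmeas : Measurable (fun x => ∑' m, ENNReal.ofReal (g m x)) :=
        Measurable.ennreal_tsum fun m => (hgm m).ennreal_ofReal
      have hfin : ∫⁻ x, ∑' m, ENNReal.ofReal (g m x) ∂κ < ⊤ := by
        rw [lintegral_tsum fun m => ((hgm m).ennreal_ofReal).aemeasurable]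
        refine lt_of_le_of_lt (ENNReal.tsum_le_tsum hgs) ?_
        rw [ENNReal.tsum_geometric]
        simp [ENNReal.sub_half]
      filter_upwards [ae_lt_top hmeas hfin.ne] with x hx
      have htend : Tendsto (fun m => ENNReal.ofReal (g m x)) atTop (nhds 0) :=
        ENNReal.tendsto_atTop_zero_of_tsum_ne_top hx.ne
      have := (ENNReal.tendsto_toReal (by simp : (0:ENNReal) ≠ ⊤)).comp htend
      simp only [Function.comp_def, ENNReal.toReal_zero] at this
      refine this.congr fun m => ?_
      exact ENNReal.toReal_ofReal (hgnn m x)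
    have hμae : ∀ᵐ x ∂μ, Tendsto (fun m => f m x) atTop (nhds (0:ℝ)) := by
      refine key μ f (fun m => hf1 m |>.measurable) (fun m x => (hf2 m x).1) fun m => ?_
      rw [← ofReal_integral_eq_lintegral_ofReal (hintμ m) (ae_of_all _ fun x => (hf2 m x).1)]
      calc ENNReal.ofReal (∫ x, f m x ∂μ) ≤ ENNReal.ofReal ((1/2:ℝ)^m) :=
            ENNReal.ofReal_le_ofReal (by linarith [hf3 m, hnn m])
        _ = (2⁻¹ : ENNReal)^m := by
            rw [ENNReal.ofReal_pow (by norm_num)]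
            congr 1
            rw [ENNReal.ofReal_div_of_pos two_pos]
            simp
    have hlamae : ∀ᵐ x ∂lam, Tendsto (fun m => f m x) atTop (nhds (1:ℝ)) := by
      have : ∀ᵐ x ∂lam, Tendsto (fun m => 1 - f m x) atTop (nhds (0:ℝ)) := by
        refine key lam (fun m x => 1 - f m x)
          (fun m => (measurable_const.sub (hf1 m).measurable))
          (fun m x => by simpa using (by linarith [(hf2 m x).2] : (0:ℝ) ≤ 1 - f m x)) fun m => ?_
        have hi : Integrable (fun x => 1 - f m x) lam := (integrable_const (1:ℝ)).sub (hintlam m)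
        rw [← ofReal_integral_eq_lintegral_ofReal hi
          (ae_of_all _ fun x => by simpa using (by linarith [(hf2 m x).2] : (0:ℝ) ≤ 1 - f m x))]
        calc ENNReal.ofReal (∫ x, (1 - f m x) ∂lam) ≤ ENNReal.ofReal ((1/2:ℝ)^m) :=
              ENNReal.ofReal_le_ofReal (by linarith [hf3 m, hnn2 m])
          _ = (2⁻¹ : ENNReal)^m := by
              rw [ENNReal.ofReal_pow (by norm_num)]
              congr 1
              rw [ENNReal.ofReal_div_of_pos two_pos]
              simp
      filter_upwards [this] with x hx
      have := hx.const_sub (1:ℝ)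
      simp only [sub_zero] at this
      refine this.congr fun m => by ring
    refine ⟨{x | ¬ Tendsto (fun m => f m x) atTop (nhds (0:ℝ))}, ?_, ?_, ?_⟩
    · exact (measurableSet_tendsto (nhds (0:ℝ)) fun m => (hf1 m).measurable).compl
    · exact ae_iff.1 hμae
    · refine measure_mono_null ?_ (ae_iff.1 hlamae)
      intro x hx
      simp only [mem_compl_iff, mem_setOf_eq, not_not] at hx ⊢
      intro hcon
      exact one_ne_zero (tendsto_nhds_unique hcon hx)

example : True := trivial

/-- For a family `ν_α`, `α ∈ U ⊆ ℝ^k` (`U` compact), of Radon probability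
measures on a bounded open `R ⊆ ℝ^d` depending continuously on `α` (weakly, tested against
continuous `f : R → [0,1]`), and a Radon probability measure `lam` on `R`, the set
`S = {α ∈ U : ν_α ⊥ lam}` is either nowhere dense in `U`, or — if `U` has nonempty interior
contained in the closure of `S` — it has packing dimension `k`. -/
theorem stmt13 {d k : ℕ} (U : Set (EuclideanSpace ℝ (Fin k))) (hU : IsCompact U)
    (R : Set (EuclideanSpace ℝ (Fin d))) (hRb : Bornology.IsBounded R) (hRo : IsOpen R)
    (ν : EuclideanSpace ℝ (Fin k) → Measure (EuclideanSpace ℝ (Fin d)))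
    [∀ α, IsProbabilityMeasure (ν α)] [∀ α, (ν α).Regular] (hνR : ∀ α, (ν α) Rᶜ = 0)
    (hcont : ∀ f : EuclideanSpace ℝ (Fin d) → ℝ, ContinuousOn f R →
      MapsTo f R (Icc (0:ℝ) 1) → ContinuousOn (fun α => ∫ x, f x ∂(ν α)) U)
    (lam : Measure (EuclideanSpace ℝ (Fin d))) [IsProbabilityMeasure lam] [lam.Regular]
    (hlamR : lam Rᶜ = 0) :
    IsNowhereDense (Subtype.val ⁻¹' {α | (ν α).MutuallySingular lam} : Set U) ∨
      (((interior U).Nonempty ∧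
          interior U ⊆ closure {α ∈ U | (ν α).MutuallySingular lam}) →
        packingDim {α ∈ U | (ν α).MutuallySingular lam} = (k : EReal)) := by
  classical
  refine Or.inr ?_
  rintro ⟨hVne, hVsub⟩
  set S : Set (EuclideanSpace ℝ (Fin k)) := {α ∈ U | (ν α).MutuallySingular lam} with hSdef
  set F : (EuclideanSpace ℝ (Fin d) → ℝ) → EuclideanSpace ℝ (Fin k) → ℝ :=
    fun f α => ∫ x, f x ∂(ν α) + ∫ x, (1 - f x) ∂lam with hF
  set T : ℕ → Set (EuclideanSpace ℝ (Fin k)) := fun m =>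
    {α | ∃ f : EuclideanSpace ℝ (Fin d) → ℝ, Continuous f ∧ (∀ x, f x ∈ Icc (0:ℝ) 1) ∧
      F f α < (1/2:ℝ)^m} with hT
  have hSA : ∀ α, (ν α).MutuallySingular lam ↔ ∀ m, α ∈ T m := by
    intro α
    exact sing_iff R hRb hRo (ν α) lam (hνR α) hlamR
  -- continuity of F f on U
  have hFx : ∀ f : EuclideanSpace ℝ (Fin d) → ℝ, Continuous f → (∀ x, f x ∈ Icc (0:ℝ) 1) →
      ContinuousOn (F f) U := by
    intro f hf hicc
    have := hcont f hf.continuousOn (fun x _ => hicc x)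
    exact this.add continuousOn_const
  -- relatively open approximations
  have hopen : ∀ m : ℕ, ∃ O : Set (EuclideanSpace ℝ (Fin k)), IsOpen O ∧ T m ∩ U = O ∩ U := by
    intro m
    have hpiece : ∀ f : EuclideanSpace ℝ (Fin d) → ℝ,
        ∃ u : Set (EuclideanSpace ℝ (Fin k)), IsOpen u ∧
          ({α | Continuous f ∧ (∀ x, f x ∈ Icc (0:ℝ) 1) ∧ F f α < (1/2:ℝ)^m} ∩ U = u ∩ U) := by
      intro f
      by_cases hf : Continuous f ∧ ∀ x, f x ∈ Icc (0:ℝ) 1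
      · obtain ⟨u, huo, hu⟩ := (_root_.continuousOn_iff'.1 (hFx f hf.1 hf.2)) (Iio ((1/2:ℝ)^m)) isOpen_Iio
        refine ⟨u, huo, ?_⟩
        rw [← hu]
        ext α
        simp only [mem_inter_iff, mem_setOf_eq, mem_preimage, mem_Iio]
        tauto
      · refine ⟨∅, isOpen_empty, ?_⟩
        ext α
        simp only [mem_inter_iff, mem_setOf_eq, empty_inter, mem_empty_iff_false, iff_false]
        rintro ⟨⟨h1, h2, -⟩, -⟩
        exact hf ⟨h1, h2⟩
    choose u huo huU using hpiece
    refine ⟨⋃ f, u f, isOpen_iUnion huo, ?_⟩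
    have hTm : T m = ⋃ f, {α | Continuous f ∧ (∀ x, f x ∈ Icc (0:ℝ) 1) ∧ F f α < (1/2:ℝ)^m} := by
      ext α
      simp only [hT, mem_setOf_eq, mem_iUnion]
    rw [hTm, iUnion_inter, iUnion_inter]
    exact iUnion_congr huU
  choose O hOo hOU using hopen
  have hSeq : S = (⋂ m, O m) ∩ U := by
    ext α
    constructor
    · rintro ⟨hαU, hsing⟩
      refine ⟨mem_iInter.2 fun m => ?_, hαU⟩
      have : α ∈ T m ∩ U := ⟨(hSA α).1 hsing m, hαU⟩
      rw [hOU m] at this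
      exact this.1
    · rintro ⟨hαO, hαU⟩
      refine ⟨hαU, (hSA α).2 fun m => ?_⟩
      have : α ∈ O m ∩ U := ⟨mem_iInter.1 hαO m, hαU⟩
      rw [← hOU m] at this
      exact this.1
  -- upper bound
  obtain ⟨Rad, hRad0, hRadsub⟩ := hU.isBounded.subset_closedBall_lt 0 0
  have hupper : packingDim S ≤ (k : EReal) :=
    (packingDim_le_upperBoxDim S).trans
      (upperBoxDim_le_of_subset_closedBall hRad0 (fun x hx => hRadsub hx.1))
  -- lower bound
  have hlower : (k : EReal) ≤ packingDim S := by
    refine le_packingDim fun E hE => ?_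
    have hsub : S ⊆ ⋂ m, O m := by rw [hSeq]; exact inter_subset_left
    have hsup : (⋂ m, O m) ∩ interior U ⊆ S := by
      rw [hSeq]
      exact fun x hx => ⟨hx.1, interior_subset hx.2⟩
    obtain ⟨i, x, r, hr, hball⟩ := baire_key isOpen_interior hVne hVsub hOo hsub hsup E hE
    exact ⟨i, le_upperBoxDim_of_ball_subset_closure hr hball⟩
  exact le_antisymm hupper hlower
end
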